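/- arXiv:1903.12165 — 2 statements merged into one kernel-verified Lean document; each statement's English description precedes it below -/
import Mathlib

section
/- Let G=(V,E) be a connected graph whose effective resistance diameter satisfies max_{u,v ∈ V} R_{uv} ≤ Δ. Then for every demand vector σ ∈ ℝ^V with σ^T 1 = 0, there exists a flow f ∈ ℝ^E with B^T f = σ and Σ_{e∈E} f(e)^2 ≤ Δ · ||σ||_1^2 / 4. -/
open Matrix BigOperators Finset

noncomputable section

variable {V : Type*} [Fintype V] [DecidableEq V]

/-- Laplacian of a weighted graph on vertex set `V` with weights `w`. -/
def lap (w : V → V → ℝ) : Matrix V V ℝ :=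
  Matrix.of fun a b => if a = b then ∑ x, w a x else -(w a b)

/-- The four Moore–Penrose conditions: `P` is the pseudoinverse of `L`. -/
def IsMPInv (L P : Matrix V V ℝ) : Prop :=
  L * P * L = L ∧ P * L * P = P ∧ (L * P)ᵀ = L * P ∧ (P * L)ᵀ = P * L

/-- Indicator vector `χ_u` of a vertex. -/
def chi (u : V) : V → ℝ := Pi.single u 1

/-- Effective resistance `R_{uv} = (χ_u - χ_v)ᵀ L⁺ (χ_u - χ_v)`, computed
from a pseudoinverse `P = L⁺` of the Laplacian. -/
def effRes (P : Matrix V V ℝ) (u v : V) : ℝ :=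
  (chi u - chi v) ⬝ᵥ P.mulVec (chi u - chi v)

/-- Energy `Σ_{e=(a,b)∈E} w(e) (φ(a) - φ(b))²` of a potential vector
(each edge counted once: the double sum counts ordered pairs, whence the `1/2`). -/
def energy (w : V → V → ℝ) (φ : V → ℝ) : ℝ :=
  (1 / 2) * ∑ a, ∑ b, w a b * (φ a - φ b) ^ 2

/-- Connectivity of the weighted graph: the kernel of its Laplacian consists
exactly of the constant vectors. -/
def Conn (w : V → V → ℝ) : Prop :=
  ∀ x : V → ℝ, (lap w).mulVec x = 0 → ∀ a b : V, x a = x b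

theorem lap_mulVec (w : V → V → ℝ) (x : V → ℝ) (hdiag : ∀ a, w a a = 0) (a : V) :
    (lap w).mulVec x a = ∑ b, w a b * (x a - x b) := by
  simp only [mulVec, dotProduct, lap, Matrix.of_apply, ite_mul, neg_mul]
  rw [Finset.sum_congr rfl (fun b _ => show
      (if a = b then (∑ x, w a x) * x b else -(w a b * x b))
      = (if a = b then (∑ x, w a x) * x a + w a b * x b else 0) - w a b * x b by
    by_cases h : a = b
    · subst h; simp
    · simp [h])]
  rw [Finset.sum_sub_distrib, Finset.sum_ite_eq, if_pos (Finset.mem_univ a), hdiag]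
  have : ∑ b, w a b * (x a - x b) = (∑ b, w a b) * x a - ∑ b, w a b * x b := by
    rw [Finset.sum_mul, ← Finset.sum_sub_distrib]; exact Finset.sum_congr rfl fun b _ => by ring
  rw [this]; ring

theorem lap_symm (w : V → V → ℝ) (hsym : ∀ a b, w a b = w b a) : (lap w)ᵀ = lap w := by
  ext a b
  by_cases h : a = b
  · subst h; simp [lap]
  · simp [lap, h, Ne.symm h, transpose_apply, hsym a b]

theorem quad_id (w : V → V → ℝ) (hsym : ∀ a b, w a b = w b a) (hdiag : ∀ a, w a a = 0)
    (x : V → ℝ) :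
    x ⬝ᵥ (lap w).mulVec x = (1/2) * ∑ a, ∑ b, w a b * (x a - x b)^2 := by
  simp only [dotProduct, lap_mulVec w x hdiag]
  have h1 : ∑ a, x a * ∑ b, w a b * (x a - x b)
      = ∑ a, ∑ b, w a b * (x a * (x a - x b)) := by
    refine Finset.sum_congr rfl fun a _ => ?_
    rw [Finset.mul_sum]; exact Finset.sum_congr rfl fun b _ => by ring
  rw [h1]
  have h2 : ∑ a, ∑ b, w a b * (x a * (x a - x b))
      = ∑ a, ∑ b, w a b * (x b * (x b - x a)) := by
    rw [Finset.sum_comm]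
    exact Finset.sum_congr rfl fun a _ => Finset.sum_congr rfl fun b _ => by rw [hsym]
  have h3 : (2:ℝ) * ∑ a, ∑ b, w a b * (x a * (x a - x b))
      = ∑ a, ∑ b, w a b * (x a - x b)^2 := by
    rw [two_mul]
    nth_rewrite 2 [h2]
    rw [← Finset.sum_add_distrib]
    refine Finset.sum_congr rfl fun a _ => ?_
    rw [← Finset.sum_add_distrib]
    exact Finset.sum_congr rfl fun b _ => by ring
  linarith

theorem mp_unique (A P Q : Matrix V V ℝ) (hP : IsMPInv A P) (hQ : IsMPInv A Q) : P = Q := by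
  obtain ⟨p1, p2, p3, p4⟩ := hP
  obtain ⟨q1, q2, q3, q4⟩ := hQ
  have h1 : A * P = A * Q := by
    calc A * P = (A * Q * A) * P := by rw [q1]
    _ = (A * Q) * (A * P) := by simp only [mul_assoc]
    _ = (A * Q)ᵀ * (A * P)ᵀ := by rw [q3, p3]
    _ = ((A * P) * (A * Q))ᵀ := by rw [← transpose_mul]
    _ = ((A * P * A) * Q)ᵀ := by simp only [mul_assoc]
    _ = (A * Q)ᵀ := by rw [p1]
    _ = A * Q := q3
  have h2 : P * A = Q * A := by
    calc P * A = P * (A * Q * A) := by rw [q1]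
    _ = (P * A) * (Q * A) := by simp only [mul_assoc]
    _ = (P * A)ᵀ * (Q * A)ᵀ := by rw [q4, p4]
    _ = ((Q * A) * (P * A))ᵀ := by rw [← transpose_mul]
    _ = (Q * (A * P * A))ᵀ := by simp only [mul_assoc]
    _ = (Q * A)ᵀ := by rw [p1]
    _ = Q * A := q4
  calc P = P * A * P := p2.symm
  _ = P * A * Q := by rw [mul_assoc, h1, ← mul_assoc]
  _ = Q * A * Q := by rw [h2]
  _ = Q := q2

theorem mp_symm (A P : Matrix V V ℝ) (hA : Aᵀ = A) (hP : IsMPInv A P) : Pᵀ = P := by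
  obtain ⟨p1, p2, p3, p4⟩ := hP
  have hT : IsMPInv A Pᵀ := by
    refine ⟨?_, ?_, ?_, ?_⟩
    · have := congrArg transpose p1
      simpa [transpose_mul, hA, mul_assoc] using this
    · have := congrArg transpose p2
      simpa [transpose_mul, hA, mul_assoc] using this
    · calc (A * Pᵀ)ᵀ = P * Aᵀ := by rw [transpose_mul, transpose_transpose]
      _ = P * A := by rw [hA]
      _ = (P * A)ᵀ := p4.symm
      _ = Aᵀ * Pᵀ := by rw [transpose_mul]
      _ = A * Pᵀ := by rw [hA]
    · calc (Pᵀ * A)ᵀ = Aᵀ * P := by rw [transpose_mul, transpose_transpose]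
      _ = A * P := by rw [hA]
      _ = (A * P)ᵀ := p3.symm
      _ = Pᵀ * Aᵀ := by rw [transpose_mul]
      _ = Pᵀ * A := by rw [hA]
  exact mp_unique A Pᵀ P hT ⟨p1, p2, p3, p4⟩

/-- in a connected unweighted graph of effective resistance diameter
at most `Δ`, every demand `σ` with `σᵀ1 = 0` admits a `σ`-flow `f` with
`Σ_e f(e)² ≤ Δ ‖σ‖₁² / 4` (the antisymmetric representation double counts each
edge, whence the `1/2`). -/
theorem stmt6 (w : V → V → ℝ) (hsym : ∀ a b, w a b = w b a)
    (h01 : ∀ a b, w a b = 0 ∨ w a b = 1) (hdiag : ∀ a, w a a = 0)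
    (hconn : Conn w) (P : Matrix V V ℝ) (hP : IsMPInv (lap w) P)
    (Δ : ℝ) (hdiam : ∀ a b : V, effRes P a b ≤ Δ)
    (σ : V → ℝ) (hσ : ∑ v, σ v = 0) :
    ∃ f : V → V → ℝ,
      (∀ a b, f a b = -f b a) ∧ (∀ a b, w a b = 0 → f a b = 0) ∧
      (∀ a, (∑ b, f a b) = σ a) ∧
      (1 / 2) * ∑ a, ∑ b, f a b ^ 2 ≤ Δ * (∑ v, |σ v|) ^ 2 / 4 := by
  rcases isEmpty_or_nonempty V with hV | hV
  · refine ⟨fun _ _ => 0, by simp, by simp, fun a => (IsEmpty.elim hV a), by simp⟩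
  set L := lap w with hLdef
  have hL : Lᵀ = L := lap_symm w hsym
  have hPsym : Pᵀ = P := mp_symm L P hL hP
  obtain ⟨p1, p2, p3, p4⟩ := hP
  set φ := P.mulVec σ with hφdef
  -- w is nonnegative and idempotent
  have hw0 : ∀ a b, 0 ≤ w a b := fun a b => by rcases h01 a b with h | h <;> simp [h]
  have hwsq : ∀ a b, w a b ^ 2 = w a b := fun a b => by rcases h01 a b with h | h <;> simp [h]
  -- L is PSD
  have hLpsd : ∀ z : V → ℝ, 0 ≤ z ⬝ᵥ L.mulVec z := by
    intro z
    rw [hLdef, quad_id w hsym hdiag z]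
    have : 0 ≤ ∑ a, ∑ b, w a b * (z a - z b)^2 :=
      Finset.sum_nonneg fun a _ => Finset.sum_nonneg fun b _ =>
        mul_nonneg (hw0 a b) (sq_nonneg _)
    linarith
  -- P is PSD
  have hPpsd : ∀ z : V → ℝ, 0 ≤ z ⬝ᵥ P.mulVec z := by
    intro z
    have : z ⬝ᵥ P.mulVec z = (P.mulVec z) ⬝ᵥ L.mulVec (P.mulVec z) := by
      conv_lhs => rw [← p2]
      rw [show (P * L * P).mulVec z = P.mulVec ((L * P).mulVec z) by
        simp [mulVec_mulVec, mul_assoc]]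
      rw [Matrix.dotProduct_mulVec, ← Matrix.mulVec_transpose, hPsym,
        show (L * P).mulVec z = L.mulVec (P.mulVec z) by simp [mulVec_mulVec]]
    rw [this]; exact hLpsd _
  -- symmetry of the P-form
  have hPbilin : ∀ x y : V → ℝ, x ⬝ᵥ P.mulVec y = y ⬝ᵥ P.mulVec x := by
    intro x y
    rw [Matrix.dotProduct_mulVec, ← Matrix.mulVec_transpose, hPsym, dotProduct_comm]
  -- L φ = σ
  have hLφ : L.mulVec φ = σ := by
    have hzero : L * (1 - L * P) = 0 := by
      have h0 : (1 - L * P) * L = 0 := by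
        rw [sub_mul, one_mul, mul_assoc]
        rw [← mul_assoc, p1, sub_self]
      have := congrArg transpose h0
      rwa [transpose_mul, transpose_sub, transpose_one, p3, hL, transpose_zero] at this
    set r := σ - L.mulVec φ with hrdef
    have hr0 : L.mulVec r = 0 := by
      have : r = (1 - L * P).mulVec σ := by
        rw [hrdef, hφdef, Matrix.sub_mulVec, Matrix.one_mulVec, mulVec_mulVec]
      rw [this, mulVec_mulVec, hzero, Matrix.zero_mulVec]
    have hconst : ∀ a b, r a = r b := hconn r hr0
    have hsum0 : ∑ a, r a = 0 := by
      have hLsum : ∀ y : V → ℝ, ∑ a, L.mulVec y a = 0 := by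
        intro y
        simp only [hLdef, lap_mulVec w y hdiag]
        have : ∑ a, ∑ b, w a b * (y a - y b) = ∑ a, ∑ b, w a b * (y b - y a) := by
          rw [Finset.sum_comm]
          exact Finset.sum_congr rfl fun a _ => Finset.sum_congr rfl fun b _ => by rw [hsym]
        have h2 : (2:ℝ) * ∑ a, ∑ b, w a b * (y a - y b) = 0 := by
          rw [two_mul]; nth_rewrite 2 [this]
          rw [← Finset.sum_add_distrib]
          refine Finset.sum_eq_zero fun a _ => ?_
          rw [← Finset.sum_add_distrib]
          exact Finset.sum_eq_zero fun b _ => by ring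
        linarith
      simp only [hrdef, Pi.sub_apply, Finset.sum_sub_distrib, hσ, hLsum φ, sub_zero]
    have : ∀ a, r a = 0 := by
      intro a
      have : ∑ x, r x = (Fintype.card V : ℝ) * r a := by
        rw [Finset.sum_congr rfl fun x _ => hconst x a]
        simp [Finset.card_univ, mul_comm]
      have hcard : 0 < (Fintype.card V : ℝ) := by
        exact_mod_cast Fintype.card_pos_iff.mpr hV
      have := this ▸ hsum0
      exact (mul_eq_zero.mp this).resolve_left (ne_of_gt hcard)
    have : r = 0 := funext this
    rw [hrdef] at this
    exact (sub_eq_zero.mp this).symm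
  
  haveI := hV
  refine ⟨fun a b => w a b * (φ a - φ b),
    fun a b => show w a b * (φ a - φ b) = -(w b a * (φ b - φ a)) by rw [hsym a b]; ring,
    fun a b h => show w a b * (φ a - φ b) = 0 by rw [h, zero_mul], fun a => ?_, ?_⟩
  · show ∑ b, w a b * (φ a - φ b) = σ a
    rw [← congrFun hLφ a, hLdef, lap_mulVec w φ hdiag]
  -- the energy equals Q := σ ⬝ᵥ φ
  set Q := σ ⬝ᵥ φ with hQdef
  have hQ0 : 0 ≤ Q := hPpsd σ
  have hE : (1 / 2) * ∑ a, ∑ b, (w a b * (φ a - φ b)) ^ 2 = Q := by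
    have h1 : ∀ a b : V, (w a b * (φ a - φ b)) ^ 2 = w a b * (φ a - φ b) ^ 2 := by
      intro a b; rw [mul_pow, hwsq]
    simp only [h1]
    rw [← quad_id w hsym hdiag φ, ← hLdef, hLφ, dotProduct_comm]
  show (1 / 2) * ∑ a, ∑ b, (w a b * (φ a - φ b)) ^ 2 ≤ Δ * (∑ v, |σ v|) ^ 2 / 4
  rw [hE]
  -- max and min of φ
  obtain ⟨A, -, hA⟩ := Finset.exists_max_image (Finset.univ : Finset V) φ Finset.univ_nonempty
  obtain ⟨B, -, hB⟩ := Finset.exists_min_image (Finset.univ : Finset V) φ Finset.univ_nonempty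
  set d := φ A - φ B with hddef
  have hd0 : 0 ≤ d := sub_nonneg.mpr (hB A (Finset.mem_univ A))
  set S := ∑ v, |σ v| with hSdef
  have hS0 : 0 ≤ S := Finset.sum_nonneg fun v _ => abs_nonneg _
  have hΔ0 : 0 ≤ Δ := by
    have h := hdiam A A
    have : effRes P A A = 0 := by simp [effRes]
    linarith
  have hchi : ∀ (u v : V) (y : V → ℝ), (chi u - chi v) ⬝ᵥ y = y u - y v := by
    intro u v y
    simp [chi, dotProduct, Pi.sub_apply, sub_mul, Finset.sum_sub_distrib,
      Pi.single_apply, ite_mul, Finset.sum_ite_eq]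
  set x := chi A - chi B with hxdef
  -- Cauchy–Schwarz via discriminant
  have key : ∀ t : ℝ, 0 ≤ Q * (t * t) + (2 * (x ⬝ᵥ P.mulVec σ)) * t + x ⬝ᵥ P.mulVec x := by
    intro t
    have h := hPpsd (x + t • σ)
    have expand : (x + t • σ) ⬝ᵥ P.mulVec (x + t • σ)
        = Q * (t * t) + (2 * (x ⬝ᵥ P.mulVec σ)) * t + x ⬝ᵥ P.mulVec x := by
      simp only [Matrix.mulVec_add, Matrix.mulVec_smul, add_dotProduct, dotProduct_add,
        smul_dotProduct, dotProduct_smul, smul_eq_mul]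
      rw [hPbilin σ x, hQdef, hφdef]
      ring
    rw [expand] at h
    exact h
  have hdisc := discrim_le_zero key
  rw [discrim] at hdisc
  have hcs : (x ⬝ᵥ P.mulVec σ) ^ 2 ≤ Q * (x ⬝ᵥ P.mulVec x) := by nlinarith
  have hxPσ : x ⬝ᵥ P.mulVec σ = d := by rw [← hφdef, hxdef, hchi]
  have hxPx : x ⬝ᵥ P.mulVec x ≤ Δ := hdiam A B
  have hd2 : d ^ 2 ≤ Q * Δ := by
    rw [← hxPσ]
    calc (x ⬝ᵥ P.mulVec σ) ^ 2 ≤ Q * (x ⬝ᵥ P.mulVec x) := hcs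
    _ ≤ Q * Δ := mul_le_mul_of_nonneg_left hxPx hQ0
  -- centering bound: Q ≤ S * d / 2
  have hQle : Q ≤ S * d / 2 := by
    set c0 := (φ A + φ B) / 2 with hc0
    have h1 : Q = ∑ u, σ u * (φ u - c0) := by
      rw [hQdef, dotProduct]
      rw [Finset.sum_congr rfl (fun u _ => show σ u * (φ u - c0) = σ u * φ u - σ u * c0 by ring),
        Finset.sum_sub_distrib, ← Finset.sum_mul, hσ, zero_mul, sub_zero]
    rw [h1]
    calc ∑ u, σ u * (φ u - c0) ≤ ∑ u, |σ u| * (d / 2) := by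
          refine Finset.sum_le_sum fun u _ => ?_
          have habs : |φ u - c0| ≤ d / 2 := by
            rw [abs_le]
            constructor
            · have := hB u (Finset.mem_univ u); rw [hc0, hddef]; linarith
            · have := hA u (Finset.mem_univ u); rw [hc0, hddef]; linarith
          calc σ u * (φ u - c0) ≤ |σ u * (φ u - c0)| := le_abs_self _
          _ = |σ u| * |φ u - c0| := abs_mul _ _
          _ ≤ |σ u| * (d / 2) := mul_le_mul_of_nonneg_left habs (abs_nonneg _)
    _ = S * (d / 2) := by rw [← Finset.sum_mul]
    _ = S * d / 2 := by ring
  -- conclude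
  rcases eq_or_lt_of_le hQ0 with h | h
  · rw [← h]
    exact div_nonneg (mul_nonneg hΔ0 (sq_nonneg S)) (by norm_num)
  · have h2Q : 2 * Q ≤ S * d := by nlinarith [hQle]
    have hsq := mul_self_le_mul_self (by linarith : (0:ℝ) ≤ 2 * Q) h2Q
    have h4 : 4 * Q ^ 2 ≤ S ^ 2 * d ^ 2 := by nlinarith [hsq]
    have h5 : S ^ 2 * d ^ 2 ≤ S ^ 2 * (Q * Δ) := by nlinarith [sq_nonneg S]
    nlinarith
end
end

section
/- Let G=(V,E) be a connected unweighted graph, let E' ⊆ E contain every edge of G whose edge-connectivity is at most d, and let u,v be two vertices lying in the same connected component of G' = (V, E \ E'). Then every cut separating u from v in G has strictly more than d edges: for every S ⊆ V with u ∈ S and v ∉ S, one has |E ∩ (S × (V\S))| > d. -/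
open BigOperators Finset

variable {V : Type*} [Fintype V] [DecidableEq V]

/-- Number of edges of `G` crossing the cut `(S, V \ S)` (each crossing edge is
counted once, as the ordered pair leaving `S`). -/
def crossCard (G : SimpleGraph V) [DecidableRel G.Adj] (S : Finset V) : ℕ :=
  (Finset.univ.filter fun p : V × V => p.1 ∈ S ∧ p.2 ∉ S ∧ G.Adj p.1 p.2).card

/-- let `E'` be a symmetric set of edges containing every edge of
edge-connectivity at most `d` (i.e. every edge whose endpoints are separated by
some cut of at most `d` edges).  If `u` and `v` lie in the same connected
component of `G' = (V, E \ E')`, then every cut separating `u` from `v` in `G`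
has strictly more than `d` edges. -/
theorem stmt17 (G : SimpleGraph V) [DecidableRel G.Adj] (d : ℕ)
    (E' : Set (V × V))
    (hE'edges : ∀ p ∈ E', G.Adj p.1 p.2)
    (hE'sym : ∀ a b : V, (a, b) ∈ E' → (b, a) ∈ E')
    (hE'all : ∀ a b : V, G.Adj a b →
      (∃ S : Finset V, a ∈ S ∧ b ∉ S ∧ crossCard G S ≤ d) → (a, b) ∈ E')
    (u v : V)
    (hreach : Relation.ReflTransGen
      (fun a b => G.Adj a b ∧ (a, b) ∉ E') u v) :
    ∀ S : Finset V, u ∈ S → v ∉ S → d < crossCard G S := by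
  intro S hu hv
  by_contra h
  push_neg at h
  have key : ∀ a b : V, Relation.ReflTransGen
      (fun a b => G.Adj a b ∧ (a, b) ∉ E') a b → a ∈ S → b ∈ S := by
    intro a b hab ha
    induction hab with
    | refl => exact ha
    | tail _ hstep ih =>
      by_contra hb
      exact hstep.2 (hE'all _ _ hstep.1 ⟨S, ih, hb, h⟩)
  exact hv (key u v hreach hu)
end
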